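/- Let K be a polytope in ℝ^n with set of facet normals H, let h be the Carathéodory number for H-convexity and k the Carathéodory number for K-strong convexity. Then k ≤ max(h, |H| - 1). -/
import Mathlib


local notation "⟪" x ", " y "⟫_ℝ" => @inner ℝ _ _ x y

/-- The `H`-convex hull of `X`. -/
def convH {n : ℕ} (H X : Set (EuclideanSpace ℝ (Fin n))) : Set (EuclideanSpace ℝ (Fin n)) :=
  ⋂₀ {S | (∃ a ∈ H, ∃ b : ℝ, S = {y | ⟪a, y⟫_ℝ ≤ b}) ∧ X ⊆ S}

/-- The `K`-strongly convex hull of `X`. -/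
def convK {n : ℕ} (K X : Set (EuclideanSpace ℝ (Fin n))) : Set (EuclideanSpace ℝ (Fin n)) :=
  ⋂₀ {S | (∃ t : EuclideanSpace ℝ (Fin n), S = (fun y => t + y) '' K) ∧ X ⊆ S}

/-- `c` is a Carathéodory bound for `H`-convexity. -/
def caraH {n : ℕ} (H : Set (EuclideanSpace ℝ (Fin n))) (c : ℕ) : Prop :=
  ∀ X : Set (EuclideanSpace ℝ (Fin n)), IsClosed X →
    convH H X = ⋃ (X' : Finset (EuclideanSpace ℝ (Fin n)))
      (_ : ↑X' ⊆ X ∧ X'.card ≤ c), convH H ↑X'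

/-- `c` is a Carathéodory bound for `K`-strong convexity. -/
def caraK {n : ℕ} (K : Set (EuclideanSpace ℝ (Fin n))) (c : ℕ) : Prop :=
  ∀ X : Set (EuclideanSpace ℝ (Fin n)), IsClosed X →
    (∃ t : EuclideanSpace ℝ (Fin n), X ⊆ (fun y => t + y) '' K) →
    convK K X = ⋃ (X' : Finset (EuclideanSpace ℝ (Fin n)))
      (_ : ↑X' ⊆ X ∧ X'.card ≤ c), convK K ↑X'

lemma mem_convK_iff {n : ℕ} {K X : Set (EuclideanSpace ℝ (Fin n))}
    {z : EuclideanSpace ℝ (Fin n)} :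
    z ∈ convK K X ↔ ∀ S : Set (EuclideanSpace ℝ (Fin n)),
      ((∃ t : EuclideanSpace ℝ (Fin n), S = (fun y => t + y) '' K) ∧ X ⊆ S) → z ∈ S := by
  simp only [convK, Set.mem_sInter, Set.mem_setOf_eq]

lemma mem_convH_iff {n : ℕ} {H X : Set (EuclideanSpace ℝ (Fin n))}
    {z : EuclideanSpace ℝ (Fin n)} :
    z ∈ convH H X ↔ ∀ S : Set (EuclideanSpace ℝ (Fin n)),
      ((∃ a ∈ H, ∃ b : ℝ, S = {y | ⟪a, y⟫_ℝ ≤ b}) ∧ X ⊆ S) → z ∈ S := by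
  simp only [convH, Set.mem_sInter, Set.mem_setOf_eq]

lemma mem_translate_iff {n : ℕ} (H : Finset (EuclideanSpace ℝ (Fin n)))
    (b : EuclideanSpace ℝ (Fin n) → ℝ) (K : Set (EuclideanSpace ℝ (Fin n)))
    (hK : K = {y | ∀ a ∈ H, ⟪a, y⟫_ℝ ≤ b a})
    (t y : EuclideanSpace ℝ (Fin n)) :
    y ∈ (fun y => t + y) '' K ↔ ∀ a ∈ H, ⟪a, y⟫_ℝ ≤ b a + ⟪a, t⟫_ℝ := by
  subst hK
  constructor
  · rintro ⟨w, hw, rfl⟩ a ha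
    have h1 := hw a ha
    rw [inner_add_right]
    linarith
  · intro hy
    refine ⟨y - t, fun a ha => ?_, by simp⟩
    have h1 := hy a ha
    rw [inner_sub_right]
    linarith

theorem stmt10 {n : ℕ} (H : Finset (EuclideanSpace ℝ (Fin n))) (h0 : (0 : EuclideanSpace ℝ (Fin n)) ∉ H)
    (b : EuclideanSpace ℝ (Fin n) → ℝ) (K : Set (EuclideanSpace ℝ (Fin n)))
    (hK : K = {y | ∀ a ∈ H, ⟪a, y⟫_ℝ ≤ b a})
    (hKcomp : IsCompact K) (hKint : (interior K).Nonempty)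
    (hfacet : ∀ a ∈ H, ∃ y : EuclideanSpace ℝ (Fin n),
      b a < ⟪a, y⟫_ℝ ∧ ∀ a' ∈ H, a' ≠ a → ⟪a', y⟫_ℝ ≤ b a')
    (h k : ℕ)
    (hh : IsLeast {c : ℕ | caraH (H : Set (EuclideanSpace ℝ (Fin n))) c} h)
    (hk : IsLeast {c : ℕ | caraK K c} k) :
    k ≤ max h (H.card - 1) := by
  classical
  apply hk.2
  show caraK K (max h (H.card - 1))
  intro X hXclosed hXtrans
  obtain ⟨t0, ht0⟩ := hXtrans
  apply Set.Subset.antisymm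
  · -- hard direction
    intro z hz
    rcases X.eq_empty_or_nonempty with rfl | hne
    · refine Set.mem_iUnion₂.2 ⟨∅, ⟨by simp, by simp⟩, ?_⟩
      simpa using hz
    · have hXcomp : IsCompact X := by
        have himg : IsCompact ((fun y => t0 + y) '' K) :=
          hKcomp.image (continuous_const.add continuous_id)
        exact himg.of_isClosed_subset hXclosed ht0
      have hmax : ∀ a : EuclideanSpace ℝ (Fin n), ∃ x : EuclideanSpace ℝ (Fin n),
          x ∈ X ∧ ∀ y ∈ X, ⟪a, y⟫_ℝ ≤ ⟪a, x⟫_ℝ := by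
        intro a
        obtain ⟨x, hxX, hx⟩ := hXcomp.exists_isMaxOn hne
          ((continuous_const.inner continuous_id).continuousOn
            (f := fun x : EuclideanSpace ℝ (Fin n) => ⟪a, x⟫_ℝ))
        exact ⟨x, hxX, fun y hy => hx hy⟩
      choose f hfX hfmax using hmax
      have ht0f : ∀ a ∈ H, ∀ x ∈ X, ⟪a, x⟫_ℝ ≤ b a + ⟪a, t0⟫_ℝ := fun a ha x hx =>
        (mem_translate_iff H b K hK t0 x).1 (ht0 hx) a ha
      by_cases hcase : ∀ a ∈ H, ⟪a, z⟫_ℝ ≤ ⟪a, f a⟫_ℝ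
      · -- Case 1 : z is in the H-convex hull of X
        have hzH : z ∈ convH (↑H) X := by
          rw [mem_convH_iff]
          rintro S ⟨⟨a, ha, β, rfl⟩, hXS⟩
          have ha' : a ∈ H := ha
          have h1 : ⟪a, f a⟫_ℝ ≤ β := hXS (hfX a)
          show ⟪a, z⟫_ℝ ≤ β
          exact le_trans (hcase a ha') h1
        rw [hh.1 X hXclosed] at hzH
        obtain ⟨X', hX', hzX'⟩ := Set.mem_iUnion₂.1 hzH
        refine Set.mem_iUnion₂.2 ⟨X', ⟨hX'.1, hX'.2.trans (le_max_left _ _)⟩, ?_⟩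
        rw [mem_convK_iff]
        rintro S ⟨⟨t, rfl⟩, hX'S⟩
        rw [mem_translate_iff H b K hK]
        intro a ha
        refine mem_convH_iff.1 hzX' {y | ⟪a, y⟫_ℝ ≤ b a + ⟪a, t⟫_ℝ}
          ⟨⟨a, Finset.mem_coe.2 ha, b a + ⟪a, t⟫_ℝ, rfl⟩, ?_⟩
        intro x hx
        exact (mem_translate_iff H b K hK t x).1 (hX'S hx) a ha
      · -- Case 2 : some constraint a₀ with sup over X below ⟪a₀, z⟫
        push_neg at hcase
        obtain ⟨a₀, ha₀H, ha₀z⟩ := hcase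
        refine Set.mem_iUnion₂.2 ⟨(H.erase a₀).image f, ⟨?_, ?_⟩, ?_⟩
        · intro x hx
          simp only [Finset.coe_image, Set.mem_image, Finset.mem_coe] at hx
          obtain ⟨a, -, rfl⟩ := hx
          exact hfX a
        · refine le_trans ?_ (le_max_right _ _)
          refine le_trans Finset.card_image_le ?_
          rw [Finset.card_erase_of_mem ha₀H]
        · rw [mem_convK_iff]
          rintro S ⟨⟨t, rfl⟩, hX'S⟩
          have hta : ∀ a ∈ H, a ≠ a₀ → ⟪a, f a⟫_ℝ ≤ b a + ⟪a, t⟫_ℝ := by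
            intro a ha hnea
            have hfa : f a ∈ (fun y => t + y) '' K := hX'S (by
              simp only [Finset.coe_image, Set.mem_image, Finset.mem_coe]
              exact ⟨a, Finset.mem_erase.2 ⟨hnea, ha⟩, rfl⟩)
            exact (mem_translate_iff H b K hK t _).1 hfa a ha
          have hXz : ∀ τ : EuclideanSpace ℝ (Fin n),
              (∀ a ∈ H, ∀ x ∈ X, ⟪a, x⟫_ℝ ≤ b a + ⟪a, τ⟫_ℝ) →
              ⟪a₀, z⟫_ℝ ≤ b a₀ + ⟪a₀, τ⟫_ℝ := by
            intro τ hτ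
            have hzS : z ∈ (fun y => τ + y) '' K :=
              mem_convK_iff.1 hz _ ⟨⟨τ, rfl⟩, fun x hx =>
                (mem_translate_iff H b K hK τ x).2 (fun a ha => hτ a ha x hx)⟩
            exact (mem_translate_iff H b K hK τ z).1 hzS a₀ ha₀H
          -- key step : the a₀ constraint is automatically satisfied by t
          have hstar : ⟪a₀, f a₀⟫_ℝ ≤ b a₀ + ⟪a₀, t⟫_ℝ := by
            by_contra hcon
            push_neg at hcon
            have hup : ⟪a₀, f a₀⟫_ℝ - b a₀ ≤ ⟪a₀, t0⟫_ℝ := by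
              have h1 := ht0f a₀ ha₀H (f a₀) (hfX a₀)
              linarith
            have hden : 0 < ⟪a₀, t0⟫_ℝ - ⟪a₀, t⟫_ℝ := by linarith
            set θ : ℝ := (⟪a₀, f a₀⟫_ℝ - b a₀ - ⟪a₀, t⟫_ℝ) / (⟪a₀, t0⟫_ℝ - ⟪a₀, t⟫_ℝ)
              with hθdef
            have hθ0 : 0 < θ := div_pos (by linarith) hden
            have hθ1 : θ ≤ 1 := (div_le_one hden).2 (by linarith)
            set τ : EuclideanSpace ℝ (Fin n) := t + θ • (t0 - t) with hτdef
            have hτa : ∀ a : EuclideanSpace ℝ (Fin n),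
                ⟪a, τ⟫_ℝ = ⟪a, t⟫_ℝ + θ * (⟪a, t0⟫_ℝ - ⟪a, t⟫_ℝ) := by
              intro a
              rw [hτdef, inner_add_right, real_inner_smul_right, inner_sub_right]
            have hτa₀ : ⟪a₀, τ⟫_ℝ = ⟪a₀, f a₀⟫_ℝ - b a₀ := by
              rw [hτa, hθdef, div_mul_cancel₀ _ hden.ne']
              ring
            have key : ⟪a₀, z⟫_ℝ ≤ b a₀ + ⟪a₀, τ⟫_ℝ := by
              refine hXz τ ?_
              intro a ha x hx
              by_cases haa : a = a₀
              · subst haa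
                have h3 := hfmax a x hx
                rw [hτa₀]
                linarith
              · have h1 := hta a ha haa
                have h2 := ht0f a ha (f a) (hfX a)
                have h3 := hfmax a x hx
                rw [hτa]
                have e1 : 0 ≤ θ * (b a + ⟪a, t0⟫_ℝ - ⟪a, f a⟫_ℝ) :=
                  mul_nonneg hθ0.le (by linarith)
                have e2 : 0 ≤ (1 - θ) * (b a + ⟪a, t⟫_ℝ - ⟪a, f a⟫_ℝ) :=
                  mul_nonneg (by linarith) (by linarith)
                nlinarith [e1, e2]
            rw [hτa₀] at key
            linarith
          -- hence X ⊆ t + K, so z ∈ t + K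
          refine mem_convK_iff.1 hz _ ⟨⟨t, rfl⟩, ?_⟩
          intro x hx
          rw [mem_translate_iff H b K hK]
          intro a ha
          by_cases haa : a = a₀
          · subst haa
            have h3 := hfmax a x hx
            linarith
          · have h1 := hta a ha haa
            have h3 := hfmax a x hx
            linarith
  · -- easy direction
    intro z hz
    obtain ⟨X', hX', hzX'⟩ := Set.mem_iUnion₂.1 hz
    rw [mem_convK_iff]
    intro S hS
    exact mem_convK_iff.1 hzX' S ⟨hS.1, fun x hx => hS.2 (hX'.1 hx)⟩
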